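/- For every n ≥ 1, the complement of the line graph of the complete graph K_n has local boxicity at most 2; that is, box_ℓ((L(K_n))ᶜ) ≤ 2. -/

import Mathlib

universe u

/-- A graph is an interval graph if its vertices can be assigned nonempty closed
intervals of `ℝ` so that distinct vertices are adjacent iff their intervals meet. -/
def IsIntervalGraph {V : Type*} (G : SimpleGraph V) : Prop :=
  ∃ I : V → Set ℝ,
    (∀ v, ∃ a b : ℝ, a ≤ b ∧ I v = Set.Icc a b) ∧
    ∀ u v : V, u ≠ v → (G.Adj u v ↔ (I u ∩ I v).Nonempty)

/-- A co-interval graph is the complement of an interval graph. -/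
def IsCoIntervalGraph {V : Type*} (G : SimpleGraph V) : Prop :=
  IsIntervalGraph Gᶜ

/-- `G` is a vertex-disjoint union of co-interval graphs: its vertex set can be
partitioned (here via the fibers of a map `c`) so that every edge joins two vertices of
the same part and the restriction to each part is a co-interval graph. -/
def IsUnionCoIntervalGraph {V : Type u} (G : SimpleGraph V) : Prop :=
  ∃ (ι : Type u) (c : V → ι),
    (∀ u v : V, G.Adj u v → c u = c v) ∧
    ∀ i : ι, IsCoIntervalGraph (G.induce {v | c v = i})

/-- There is a covering of the edges of `Hᶜ` by finitely many subgraphs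
`G 0, …, G (t-1)` of `Hᶜ`, each of which restricted to its non-isolated vertices is a
co-interval graph, such that every vertex is a non-isolated vertex of at most `s`
of them. -/
def LocalCoverLE {V : Type u} (H : SimpleGraph V) (s : ℕ) : Prop :=
  ∃ (t : ℕ) (G : Fin t → SimpleGraph V),
    (∀ i, G i ≤ Hᶜ) ∧
    (∀ u v : V, Hᶜ.Adj u v → ∃ i, (G i).Adj u v) ∧
    (∀ i, IsCoIntervalGraph ((G i).induce (G i).support)) ∧
    ∀ v : V, {i : Fin t | v ∈ (G i).support}.ncard ≤ s

/-- The local boxicity of `H`. -/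
noncomputable def localBoxicity {V : Type u} (H : SimpleGraph V) : ℕ :=
  sInf {s : ℕ | LocalCoverLE H s}

/-- The union boxicity of `H`: the least `k` such that `Hᶜ` is covered by `k`
subgraphs, each a vertex-disjoint union of co-interval graphs. -/
noncomputable def unionBoxicity {V : Type u} (H : SimpleGraph V) : ℕ :=
  sInf {k : ℕ | ∃ G : Fin k → SimpleGraph V,
    (∀ i, G i ≤ Hᶜ) ∧
    (∀ u v : V, Hᶜ.Adj u v → ∃ i, (G i).Adj u v) ∧
    ∀ i, IsUnionCoIntervalGraph (G i)}

/-- The boxicity of `H`: the least `d` such that `H` is the intersection of `d`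
interval graphs on its vertex set. -/
noncomputable def boxicity {V : Type u} (H : SimpleGraph V) : ℕ :=
  sInf {d : ℕ | ∃ G : Fin d → SimpleGraph V,
    (∀ i, IsIntervalGraph (G i)) ∧
    ∀ u v : V, u ≠ v → (H.Adj u v ↔ ∀ i, (G i).Adj u v)}

/-- The line graph of the complete graph `K_n`: vertices are the 2-element subsets of
`Fin n`, two of them adjacent iff they share exactly one element. -/
def lineGraphCompleteGraph (n : ℕ) :
    SimpleGraph {s : Finset (Fin n) // s.card = 2} where
  Adj a b := ((a : Finset (Fin n)) ∩ (b : Finset (Fin n))).card = 1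
  symm := by
    constructor
    intro a b h
    rwa [Finset.inter_comm]
  loopless := by
    constructor
    intro a h
    rw [Finset.inter_self, a.2] at h
    exact absurd h (by norm_num)

/-- The clique of all pairs containing `i`. -/
def cliqueAt (n : ℕ) (i : Fin n) : SimpleGraph {s : Finset (Fin n) // s.card = 2} where
  Adj a b := a ≠ b ∧ i ∈ (a : Finset (Fin n)) ∧ i ∈ (b : Finset (Fin n))
  symm := ⟨fun a b ⟨h, h1, h2⟩ => ⟨h.symm, h2, h1⟩⟩
  loopless := ⟨fun a ⟨h, _⟩ => h rfl⟩

/-- A finite complete graph is a co-interval graph. -/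
lemma isCoInterval_of_complete {V : Type*} [Finite V] (G : SimpleGraph V)
    (h : ∀ u v : V, u ≠ v → G.Adj u v) : IsCoIntervalGraph G := by
  classical
  obtain ⟨m, ⟨e⟩⟩ := Finite.exists_equiv_fin V
  refine ⟨fun v => Set.Icc ((e v : ℕ) : ℝ) ((e v : ℕ) : ℝ), fun v => ⟨_, _, le_refl _, rfl⟩,
    fun u v huv => ?_⟩
  have h1 : ¬ Gᶜ.Adj u v := by
    simp only [SimpleGraph.compl_adj, not_and, not_not]
    exact fun _ => h u v huv
  have h2 : ¬ (Set.Icc ((e u : ℕ) : ℝ) ((e u : ℕ) : ℝ) ∩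
      Set.Icc ((e v : ℕ) : ℝ) ((e v : ℕ) : ℝ)).Nonempty := by
    rw [Set.Icc_self, Set.Icc_self]
    rintro ⟨x, hx1, hx2⟩
    simp only [Set.mem_singleton_iff] at hx1 hx2
    apply huv
    apply e.injective
    have : ((e u : ℕ) : ℝ) = ((e v : ℕ) : ℝ) := by rw [← hx1, ← hx2]
    exact Fin.ext (Nat.cast_injective this)
  tauto

lemma mem_of_support {n : ℕ} (i : Fin n) (v : {s : Finset (Fin n) // s.card = 2})
    (hv : v ∈ (cliqueAt n i).support) : i ∈ (v : Finset (Fin n)) := by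
  obtain ⟨w, hw⟩ := hv
  exact (hw : v ≠ w ∧ i ∈ (v : Finset (Fin n)) ∧ i ∈ (w : Finset (Fin n))).2.1

/-- For every `n ≥ 1`, the complement of the line graph of `K_n`
has local boxicity at most 2. -/
theorem stmt_11 (n : ℕ) (hn : 1 ≤ n) :
    localBoxicity (lineGraphCompleteGraph n)ᶜ ≤ 2 := by
  classical
  apply Nat.sInf_le
  refine ⟨n, fun i => cliqueAt n i, ?_, ?_, ?_, ?_⟩
  · -- each cliqueAt ≤ Hᶜ
    intro i a b hab
    rw [compl_compl]
    obtain ⟨hne, ha, hb⟩ : a ≠ b ∧ i ∈ (a : Finset (Fin n)) ∧ i ∈ (b : Finset (Fin n)) := hab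
    show ((a : Finset (Fin n)) ∩ (b : Finset (Fin n))).card = 1
    have h1 : 1 ≤ ((a : Finset (Fin n)) ∩ (b : Finset (Fin n))).card :=
      Finset.card_pos.mpr ⟨i, Finset.mem_inter.mpr ⟨ha, hb⟩⟩
    have h2 : ((a : Finset (Fin n)) ∩ (b : Finset (Fin n))).card ≤ 2 := by
      calc ((a : Finset (Fin n)) ∩ (b : Finset (Fin n))).card
          ≤ (a : Finset (Fin n)).card := Finset.card_le_card Finset.inter_subset_left
        _ = 2 := a.2
    have h3 : ((a : Finset (Fin n)) ∩ (b : Finset (Fin n))).card ≠ 2 := by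
      intro hc
      apply hne
      have hia : (a : Finset (Fin n)) ∩ (b : Finset (Fin n)) = (a : Finset (Fin n)) :=
        Finset.eq_of_subset_of_card_le Finset.inter_subset_left (by rw [hc, a.2])
      have hib : (a : Finset (Fin n)) ∩ (b : Finset (Fin n)) = (b : Finset (Fin n)) :=
        Finset.eq_of_subset_of_card_le Finset.inter_subset_right (by rw [hc, b.2])
      exact Subtype.ext (hia ▸ hib)
    omega
  · -- coverage
    intro a b hab
    rw [compl_compl] at hab
    have h1 : ((a : Finset (Fin n)) ∩ (b : Finset (Fin n))).card = 1 := hab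
    obtain ⟨i, hi⟩ := Finset.card_eq_one.mp h1
    have hia : i ∈ (a : Finset (Fin n)) ∩ (b : Finset (Fin n)) := by
      rw [hi]; exact Finset.mem_singleton_self i
    rw [Finset.mem_inter] at hia
    exact ⟨i, show a ≠ b ∧ i ∈ (a : Finset (Fin n)) ∧ i ∈ (b : Finset (Fin n)) from ⟨hab.ne, hia.1, hia.2⟩⟩
  · -- each induced support graph is co-interval
    intro i
    apply isCoInterval_of_complete
    rintro ⟨u, hu⟩ ⟨v, hv⟩ huv
    exact (show u ≠ v ∧ i ∈ (u : Finset (Fin n)) ∧ i ∈ (v : Finset (Fin n)) from ⟨fun h => huv (Subtype.ext h), mem_of_support i u hu, mem_of_support i v hv⟩)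
  · -- local condition
    intro v
    have hsub : {i : Fin n | v ∈ (cliqueAt n i).support} ⊆ ↑(v : Finset (Fin n)) := by
      intro i hi
      exact mem_of_support i v hi
    calc {i : Fin n | v ∈ (cliqueAt n i).support}.ncard
        ≤ (↑(v : Finset (Fin n)) : Set (Fin n)).ncard :=
          Set.ncard_le_ncard hsub (Finset.finite_toSet _)
      _ = 2 := by rw [Set.ncard_coe_finset, v.2]
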